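/- Let λ be a partition with ℓ = ℓ(λ) and let w be an invertible element of K such that every factor occurring in a denominator below is nonzero. Then 1/(1−t^{−ℓ} w) · ∏_{i=1}^{ℓ} (1−q^{λ_i} t^{−i} w)/(1−q^{λ_i} t^{1−i} w) + w^{−1} · 1/(1−t^{ℓ} w^{−1}) · ∏_{i=1}^{ℓ} (1−q^{−λ_i} t^{i} w^{−1})/(1−q^{−λ_i} t^{i−1} w^{−1}) = 0. -/

import Mathlib

open Finset

noncomputable section

lemma ratio_eq {K : Type*} [Field K] (q t w : K) (hq : q ≠ 0) (ht : t ≠ 0) (hw : w ≠ 0)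
    (a i : ℤ)
    (h1 : 1 - q ^ a * t ^ (1 - i) * w ≠ 0)
    (h2 : 1 - q ^ (-a) * t ^ (i - 1) * w⁻¹ ≠ 0) :
    (1 - q ^ (-a) * t ^ i * w⁻¹) / (1 - q ^ (-a) * t ^ (i - 1) * w⁻¹)
      = t * ((1 - q ^ a * t ^ (-i) * w) / (1 - q ^ a * t ^ (1 - i) * w)) := by
  have hA : q ^ (-a) * q ^ a = 1 := by rw [← zpow_add₀ hq]; simp
  have hC : w⁻¹ * w = 1 := inv_mul_cancel₀ hw
  have e1 : 1 - q ^ (-a) * t ^ i * w⁻¹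
      = (-(q ^ (-a) * t ^ i * w⁻¹)) * (1 - q ^ a * t ^ (-i) * w) := by
    have hB : t ^ i * t ^ (-i) = 1 := by rw [← zpow_add₀ ht]; simp
    linear_combination (-(t ^ i * t ^ (-i)) * (w⁻¹ * w)) * hA + (-(w⁻¹ * w)) * hB - hC
  have e2 : 1 - q ^ (-a) * t ^ (i - 1) * w⁻¹
      = (-(q ^ (-a) * t ^ (i - 1) * w⁻¹)) * (1 - q ^ a * t ^ (1 - i) * w) := by
    have hB : t ^ (i - 1) * t ^ (1 - i) = 1 := by rw [← zpow_add₀ ht]; simp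
    linear_combination (-(t ^ (i - 1) * t ^ (1 - i)) * (w⁻¹ * w)) * hA + (-(w⁻¹ * w)) * hB - hC
  rw [e1, e2, mul_div_mul_comm]
  have hqa : q ^ (-a) ≠ 0 := zpow_ne_zero _ hq
  have hwi : w⁻¹ ≠ 0 := inv_ne_zero hw
  have : (-(q ^ (-a) * t ^ i * w⁻¹)) / (-(q ^ (-a) * t ^ (i - 1) * w⁻¹)) = t := by
    rw [neg_div_neg_eq, mul_div_mul_right _ _ hwi, mul_div_mul_left _ _ hqa,
      ← zpow_sub₀ ht]
    simp
  rw [this]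

theorem stmt9 {K : Type*} [Field K] (q t : K) (hq : q ≠ 0) (ht : t ≠ 0)
    (w : K) (hw : w ≠ 0)
    (lam : ℕ → ℕ) (l : ℕ)
    (hmono : ∀ k, 1 ≤ k → lam (k + 1) ≤ lam k)
    (hlen : ∀ k, l < k → lam k = 0)
    (hlpos : l = 0 ∨ lam l ≠ 0)
    (hd0 : 1 - t ^ (-(l : ℤ)) * w ≠ 0)
    (hd0' : 1 - t ^ (l : ℤ) * w⁻¹ ≠ 0)
    (hd : ∀ i ∈ Finset.Icc 1 l,
      1 - q ^ (lam i : ℤ) * t ^ (1 - (i : ℤ)) * w ≠ 0 ∧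
      1 - q ^ (-(lam i : ℤ)) * t ^ ((i : ℤ) - 1) * w⁻¹ ≠ 0) :
    (1 - t ^ (-(l : ℤ)) * w)⁻¹ *
        (∏ i ∈ Finset.Icc 1 l,
          (1 - q ^ (lam i : ℤ) * t ^ (-(i : ℤ)) * w) /
            (1 - q ^ (lam i : ℤ) * t ^ (1 - (i : ℤ)) * w)) +
      w⁻¹ * (1 - t ^ (l : ℤ) * w⁻¹)⁻¹ *
        (∏ i ∈ Finset.Icc 1 l,
          (1 - q ^ (-(lam i : ℤ)) * t ^ (i : ℤ) * w⁻¹) /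
            (1 - q ^ (-(lam i : ℤ)) * t ^ ((i : ℤ) - 1) * w⁻¹)) = 0 := by
  set P := ∏ i ∈ Finset.Icc 1 l,
      (1 - q ^ (lam i : ℤ) * t ^ (-(i : ℤ)) * w) /
        (1 - q ^ (lam i : ℤ) * t ^ (1 - (i : ℤ)) * w) with hP
  have hprod : (∏ i ∈ Finset.Icc 1 l,
      (1 - q ^ (-(lam i : ℤ)) * t ^ (i : ℤ) * w⁻¹) /
        (1 - q ^ (-(lam i : ℤ)) * t ^ ((i : ℤ) - 1) * w⁻¹)) = t ^ (l : ℤ) * P := by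
    have : (∏ i ∈ Finset.Icc 1 l,
        (1 - q ^ (-(lam i : ℤ)) * t ^ (i : ℤ) * w⁻¹) /
          (1 - q ^ (-(lam i : ℤ)) * t ^ ((i : ℤ) - 1) * w⁻¹))
        = ∏ i ∈ Finset.Icc 1 l,
          t * ((1 - q ^ (lam i : ℤ) * t ^ (-(i : ℤ)) * w) /
            (1 - q ^ (lam i : ℤ) * t ^ (1 - (i : ℤ)) * w)) := by
      refine Finset.prod_congr rfl fun i hi => ?_
      exact ratio_eq q t w hq ht hw (lam i) i (hd i hi).1 (hd i hi).2
    rw [this, Finset.prod_mul_distrib, Finset.prod_const, Nat.card_Icc]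
    simp [hP, zpow_natCast]
  rw [hprod]
  have key : w⁻¹ * (1 - t ^ (l : ℤ) * w⁻¹)⁻¹ * t ^ (l : ℤ) = -(1 - t ^ (-(l : ℤ)) * w)⁻¹ := by
    have hC : w⁻¹ * w = 1 := inv_mul_cancel₀ hw
    have hB : t ^ (l : ℤ) * t ^ (-(l : ℤ)) = 1 := by rw [← zpow_add₀ ht]; simp
    have e : 1 - t ^ (l : ℤ) * w⁻¹ = (-(t ^ (l : ℤ) * w⁻¹)) * (1 - t ^ (-(l : ℤ)) * w) := by
      linear_combination (-(w⁻¹ * w)) * hB - hC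
    have htl : (t : K) ^ (l : ℤ) ≠ 0 := zpow_ne_zero _ ht
    have hne : t ^ (l : ℤ) - w ≠ 0 := by
      intro h
      apply hd0'
      rw [sub_eq_zero.mp h, mul_inv_cancel₀ hw, sub_self]
    rw [e, mul_inv, inv_neg, mul_inv]
    field_simp
  calc (1 - t ^ (-(l : ℤ)) * w)⁻¹ * P + w⁻¹ * (1 - t ^ (l : ℤ) * w⁻¹)⁻¹ * (t ^ (l : ℤ) * P)
      = (1 - t ^ (-(l : ℤ)) * w)⁻¹ * P + (w⁻¹ * (1 - t ^ (l : ℤ) * w⁻¹)⁻¹ * t ^ (l : ℤ)) * P := by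
        ring
    _ = 0 := by rw [key]; ring

end
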